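/- arXiv:1210.2540 — 3 statements merged into one kernel-verified Lean document; each statement's English description precedes it below -/
import Mathlib

section
/- Let C be a binary code of length n. Suppose that for every automorphism of C of odd prime order p, if the automorphism has c cycles of length p and f fixed points on the coordinates, then p does not divide c and f < p. Then for every odd prime p, p² does not divide the order of the automorphism group of C. -/
open Finset MulAction

private lemma aux_fix_card {n p : ℕ} (hp : p.Prime) (σ : Equiv.Perm (Fin n))
    (hord : orderOf σ = p) :
    p ∣ n - (Finset.univ.filter fun i => σ i = i).card ∧
      (Finset.univ.filter fun i => σ i = i).card ≤ n := by
  haveI : Fact p.Prime := ⟨hp⟩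
  set f := (Finset.univ.filter fun i => σ i = i).card with hf
  have hle : f ≤ n := by
    have := Finset.card_filter_le Finset.univ (fun i => σ i = i)
    simpa using this
  refine ⟨?_, hle⟩
  have hK : IsPGroup p ↥(Subgroup.zpowers σ) :=
    IsPGroup.of_card (by rw [Nat.card_zpowers, hord, pow_one])
  have h1 := hK.card_modEq_card_fixedPoints (Fin n)
  have h2 : MulAction.fixedPoints ↥(Subgroup.zpowers σ) (Fin n) = {x | σ x = x} := by
    ext x
    simp only [MulAction.mem_fixedPoints, Set.mem_setOf_eq]
    constructor
    · intro h
      have := h ⟨σ, Subgroup.mem_zpowers σ⟩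
      simpa [Subgroup.smul_def, Equiv.Perm.smul_def] using this
    · intro hx m
      have hs : σ ∈ MulAction.stabilizer (Equiv.Perm (Fin n)) x := by
        simpa [MulAction.mem_stabilizer_iff, Equiv.Perm.smul_def] using hx
      have := Subgroup.zpowers_le.mpr hs m.2
      simpa [MulAction.mem_stabilizer_iff, Subgroup.smul_def] using this
  have h3 : Nat.card (MulAction.fixedPoints ↥(Subgroup.zpowers σ) (Fin n)) = f := by
    rw [h2, hf]
    classical
    rw [Nat.card_eq_fintype_card]
    simp [Set.coe_setOf, Fintype.card_subtype]
  rw [h3, Nat.card_eq_fintype_card, Fintype.card_fin] at h1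
  exact (Nat.modEq_iff_dvd' hle).mp h1.symm

private lemma aux_common_fix {n p : ℕ} (hp : p.Prime) {g h : Equiv.Perm (Fin n)}
    (hc : Commute g h) (hordh : orderOf h = p)
    (hSlt : (Finset.univ.filter fun i => g i = i).card < p)
    {x : Fin n} (hx : g x = x) : h x = x := by
  by_contra hne
  have hper : MulAction.period h x ∣ p := hordh ▸ MulAction.period_dvd_orderOf h x
  have hper1 : MulAction.period h x ≠ 1 := by
    intro h1
    exact hne (by simpa [Equiv.Perm.smul_def] using MulAction.period_eq_one_iff.mp h1)
  have hperp : MulAction.period h x = p :=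
    (hp.eq_one_or_self_of_dvd _ hper).resolve_left hper1
  have hmem : ∀ k : ℕ, (h ^ k) x ∈ Finset.univ.filter fun i => g i = i := by
    intro k
    simp only [Finset.mem_filter, Finset.mem_univ, true_and]
    have hck : Commute g (h ^ k) := hc.pow_right k
    calc g ((h ^ k) x) = (g * h ^ k) x := rfl
      _ = (h ^ k * g) x := by rw [hck]
      _ = (h ^ k) (g x) := rfl
      _ = (h ^ k) x := by rw [hx]
  have himage : (Finset.range p).card ≤ (Finset.univ.filter fun i => g i = i).card := by
    apply Finset.card_le_card_of_injOn (fun k => (h ^ k) x) (fun k _ => hmem k)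
    intro a ha b hb hab
    simp only [Finset.coe_range, Set.mem_Iio] at ha hb
    have main : ∀ a b : ℕ, a < b → b < p → ¬ (h ^ a) x = (h ^ b) x := by
      clear hab ha hb
      intro a b hlt hb hab
      have key : (h ^ (b - a)) x = x := by
        have h2 : (h ^ a) ((h ^ (b - a)) x) = (h ^ a) x := by
          have h3 : h ^ a * h ^ (b - a) = h ^ b := by
            rw [← pow_add]; congr 1; omega
          calc (h ^ a) ((h ^ (b - a)) x) = (h ^ a * h ^ (b - a)) x := rfl
            _ = (h ^ b) x := by rw [h3]
            _ = (h ^ a) x := hab.symm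
        exact (h ^ a).injective h2
      have := MulAction.pow_smul_ne_of_lt_period (m := h) (a := x) (n := b - a)
        (by omega) (by omega)
      exact this (by simpa [Equiv.Perm.smul_def] using key)
    rcases lt_trichotomy a b with hlt | heq | hlt
    · exact absurd hab (main a b hlt hb)
    · exact heq
    · exact absurd hab.symm (main b a hlt ha)
  rw [Finset.card_range] at himage
  omega

/-- Proposition 4.1: Let `C` be a binary code of length `n` and `G` its automorphism group.
If for every automorphism of `C` of odd prime order `p` with `c` `p`-cycles and `f` fixed
points one has `p ∤ c` and `f < p`, then `p² ∤ |Aut(C)|` for every odd prime `p`. -/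
theorem odd_prime_square_not_dvd_aut (n : ℕ) (C : Set (Fin n → ZMod 2))
    (G : Subgroup (Equiv.Perm (Fin n)))
    (hG : ∀ σ : Equiv.Perm (Fin n), σ ∈ G ↔ ∀ v : Fin n → ZMod 2, v ∈ C ↔ (v ∘ σ) ∈ C)
    (hcycles : ∀ σ ∈ G, ∀ p : ℕ, p.Prime → Odd p → orderOf σ = p →
      ∀ c f : ℕ, f = (Finset.univ.filter fun i => σ i = i).card → n = c * p + f →
        ¬ p ∣ c ∧ f < p) :
    ∀ p : ℕ, p.Prime → Odd p → ¬ p ^ 2 ∣ Nat.card G := by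
  intro p hp hodd hdvd
  classical
  haveI : Fact p.Prime := ⟨hp⟩
  obtain ⟨H, hH⟩ := Sylow.exists_subgroup_card_pow_prime p (n := 2) hdvd
  set P : Subgroup (Equiv.Perm (Fin n)) := H.map G.subtype with hPdef
  have hPle : P ≤ G := Subgroup.map_subtype_le H
  have hPcard : Nat.card P = p ^ 2 := by
    rw [← hH]
    exact Nat.card_congr (Subgroup.equivMapOfInjective H G.subtype G.subtype_injective).symm.toEquiv
  have hcomm : ∀ a b : ↥P, a * b = b * a := IsPGroup.commutative_of_card_eq_prime_sq hPcard
  have hcommE : ∀ g ∈ P, ∀ h ∈ P, Commute g h := by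
    intro g hg h hh
    exact congrArg Subtype.val (hcomm ⟨g, hg⟩ ⟨h, hh⟩)
  -- every element of `P` of order `p` satisfies the cycle condition
  have key : ∀ g ∈ P, orderOf g = p → ∃ c : ℕ,
      n = c * p + (Finset.univ.filter fun i => g i = i).card ∧ ¬ p ∣ c ∧
        (Finset.univ.filter fun i => g i = i).card < p := by
    intro g hg hord
    obtain ⟨hdv, hle⟩ := aux_fix_card hp g hord
    set f := (Finset.univ.filter fun i => g i = i).card with hf
    have hcp : (n - f) / p * p = n - f := Nat.div_mul_cancel hdv
    have hn : n = (n - f) / p * p + f := by omega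
    exact ⟨(n - f) / p, hn, hcycles g (hPle hg) p hp hodd hord _ f rfl hn⟩
  -- all order-p elements of P fix each other's fixed points
  have hsub : ∀ g ∈ P, orderOf g = p → ∀ h ∈ P, orderOf h = p →
      ∀ x : Fin n, g x = x → h x = x := by
    intro g hg hordg h hh hordh x hx
    obtain ⟨c, hn, hpc, hflt⟩ := key g hg hordg
    exact aux_common_fix hp (hcommE g hg h hh) hordh hflt hx
  haveI : Fintype ↥P := Fintype.ofFinite _
  obtain ⟨u, hu⟩ := exists_prime_orderOf_dvd_card (G := ↥P) p
    (by rw [← Nat.card_eq_fintype_card, hPcard]; exact ⟨p, sq p⟩)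
  have hg₀P : (u : Equiv.Perm (Fin n)) ∈ P := u.2
  have hordg₀ : orderOf (u : Equiv.Perm (Fin n)) = p := by
    rw [← hu]; exact orderOf_injective P.subtype P.subtype_injective u
  set g₀ : Equiv.Perm (Fin n) := (u : Equiv.Perm (Fin n)) with hg₀
  obtain ⟨c₀, hn₀, hpc₀, hf₀⟩ := key g₀ hg₀P hordg₀
  -- the set of non-fixed points of g₀
  set U : Finset (Fin n) := Finset.univ.filter fun x => ¬ g₀ x = x with hU
  have hUcard : U.card = c₀ * p := by
    have := Finset.card_filter_add_card_filter_not (s := Finset.univ)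
      (p := fun i => g₀ i = i)
    simp only [Finset.card_univ, Fintype.card_fin] at this
    show (Finset.univ.filter fun x => ¬ g₀ x = x).card = c₀ * p
    omega
  -- p ^ 2 divides U.card via the orbit partition
  have hdd : p ^ 2 ∣ U.card := by
    haveI : Fintype (MulAction.orbitRel.Quotient ↥P (Fin n)) := Fintype.ofFinite _
    rw [Finset.card_eq_sum_card_fiberwise
      (f := (Quotient.mk'' : Fin n → MulAction.orbitRel.Quotient ↥P (Fin n)))
      (t := Finset.univ) (fun x _ => Finset.mem_univ _)]
    apply Finset.dvd_sum
    intro ω _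
    by_cases hE : (U.filter fun x => Quotient.mk'' x = ω).Nonempty
    · obtain ⟨x, hxmem⟩ := hE
      rw [Finset.mem_filter] at hxmem
      obtain ⟨hxU, hxω⟩ := hxmem
      have hxne : ¬ g₀ x = x := by
        rw [hU, Finset.mem_filter] at hxU; exact hxU.2
      -- trivial stabilizer
      have hstab : MulAction.stabilizer ↥P x = ⊥ := by
        by_contra hb
        haveI hnt : Nontrivial ↥(MulAction.stabilizer ↥P x) := by
          rcases (MulAction.stabilizer ↥P x).bot_or_nontrivial with h | h
          · exact absurd h hb
          · exact h
        have hdvd2 : Nat.card (MulAction.stabilizer ↥P x) ∣ p ^ 2 :=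
          hPcard ▸ Subgroup.card_subgroup_dvd_card _
        obtain ⟨j, hj, hcardst⟩ := (Nat.dvd_prime_pow hp).mp hdvd2
        have hj0 : j ≠ 0 := by
          rintro rfl
          rw [pow_zero] at hcardst
          exact (not_subsingleton_iff_nontrivial.mpr hnt)
            (Nat.card_eq_one_iff_unique.mp hcardst).1
        have hpdvd : p ∣ Nat.card (MulAction.stabilizer ↥P x) :=
          hcardst ▸ dvd_pow_self p hj0
        haveI : Fintype ↥(MulAction.stabilizer ↥P x) := Fintype.ofFinite _
        obtain ⟨k, hk⟩ := exists_prime_orderOf_dvd_card (G := ↥(MulAction.stabilizer ↥P x)) p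
          (by rwa [← Nat.card_eq_fintype_card])
        have hordm : orderOf (((k : ↥P) : Equiv.Perm (Fin n))) = p := by
          have e1 := orderOf_injective P.subtype P.subtype_injective
            ((MulAction.stabilizer ↥P x).subtype k)
          have e2 := orderOf_injective (MulAction.stabilizer ↥P x).subtype
            (MulAction.stabilizer ↥P x).subtype_injective k
          simpa [Subgroup.coe_subtype] using e1.trans (e2.trans hk)
        have hmemP : ((k : ↥P) : Equiv.Perm (Fin n)) ∈ P := (k : ↥P).2
        have hfix : ((k : ↥P) : Equiv.Perm (Fin n)) x = x := by
          have hk2 := k.2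
          rw [MulAction.mem_stabilizer_iff] at hk2
          simpa [Subgroup.smul_def, Equiv.Perm.smul_def] using hk2
        exact hxne (hsub _ hmemP hordm g₀ hg₀P hordg₀ x hfix)
      -- the fiber is the orbit of x
      have horb : (U.filter fun y => Quotient.mk'' y = ω) = (MulAction.orbit ↥P x).toFinset := by
        ext y
        simp only [Finset.mem_filter, Set.mem_toFinset]
        constructor
        · rintro ⟨hyU, hyω⟩
          have : (Quotient.mk'' y : MulAction.orbitRel.Quotient ↥P (Fin n)) = Quotient.mk'' x :=
            hyω.trans hxω.symm
          exact (MulAction.orbitRel_apply.mp (Quotient.eq''.mp this))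
        · intro hy
          obtain ⟨m, rfl⟩ := hy
          constructor
          · rw [hU, Finset.mem_filter]
            refine ⟨Finset.mem_univ _, ?_⟩
            intro hfix
            apply hxne
            have hfix' : g₀ ((m : Equiv.Perm (Fin n)) x) = (m : Equiv.Perm (Fin n)) x := hfix
            have hcm : Commute g₀ ((m : Equiv.Perm (Fin n))) := hcommE g₀ hg₀P _ m.2
            have h1 : g₀ ((m : Equiv.Perm (Fin n)) x) = (m : Equiv.Perm (Fin n)) (g₀ x) := by
              calc g₀ ((m : Equiv.Perm (Fin n)) x) = (g₀ * (m : Equiv.Perm (Fin n))) x := rfl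
                _ = ((m : Equiv.Perm (Fin n)) * g₀) x := by rw [hcm]
                _ = (m : Equiv.Perm (Fin n)) (g₀ x) := rfl
            rw [h1] at hfix'
            exact (m : Equiv.Perm (Fin n)).injective hfix'
          · have : (Quotient.mk'' (m • x) : MulAction.orbitRel.Quotient ↥P (Fin n)) =
                Quotient.mk'' x :=
              Quotient.eq''.mpr (MulAction.orbitRel_apply.mpr (MulAction.mem_orbit x m))
            exact this.trans hxω
      rw [horb]
      -- orbit has cardinality p ^ 2
      have hcardorb : Nat.card (MulAction.orbit ↥P x) = p ^ 2 := by
        rw [Nat.card_congr (MulAction.orbitEquivQuotientStabilizer ↥P x), hstab]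
        rw [Nat.card_congr (QuotientGroup.quotientBot (G := ↥P)).toEquiv]
        exact hPcard
      have : ((MulAction.orbit ↥P x).toFinset).card = Nat.card (MulAction.orbit ↥P x) := by
        rw [Set.toFinset_card, Nat.card_eq_fintype_card]
      rw [this, hcardorb]
    · rw [Finset.not_nonempty_iff_eq_empty.mp hE, Finset.card_empty]
      exact dvd_zero _
  rw [hUcard] at hdd
  apply hpc₀
  have : p * p ∣ c₀ * p := by rwa [← sq]
  exact (Nat.mul_dvd_mul_iff_right hp.pos).mp this
end

section
/- Let G be a group of order p² (p prime) acting faithfully on a finite set of size n, such that every element of order p has fewer than p fixed points and the number of p-cycles of every element of order p is not divisible by p. Then no such group G exists; equivalently, if every element of prime order p in a permutation group has fewer than p fixed points and a number of p-cycles not divisible by p, then p² does not divide the group order. -/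
private lemma perm_card_mod_aux {α : Type*} [Fintype α] [DecidableEq α] {p : ℕ} (hp : p.Prime)
    (σ : Equiv.Perm α) (hσ : orderOf σ = p) :
    ∃ c, Fintype.card α = c * p + (Finset.univ.filter fun i => σ i = i).card := by
  haveI : Fact p.Prime := ⟨hp⟩
  set f := (Finset.univ.filter fun i => σ i = i).card with hf
  have hfle : f ≤ Fintype.card α := by
    rw [hf, ← Finset.card_univ]; exact Finset.card_filter_le _ _
  have hS : IsPGroup p (Subgroup.zpowers σ) :=
    IsPGroup.of_card (by rw [Nat.card_zpowers, hσ, pow_one])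
  have hmod := hS.card_modEq_card_fixedPoints α
  have hfixeq : MulAction.fixedPoints (Subgroup.zpowers σ) α = {x | σ x = x} := by
    ext x
    simp only [MulAction.mem_fixedPoints, Set.mem_setOf_eq]
    constructor
    · intro hx
      simpa [Subgroup.smul_def] using hx ⟨σ, Subgroup.mem_zpowers σ⟩
    · intro hx g
      have hσs : σ ∈ MulAction.stabilizer (Equiv.Perm α) x := hx
      have hg : (g : Equiv.Perm α) ∈ MulAction.stabilizer (Equiv.Perm α) x :=
        (Subgroup.zpowers_le.mpr hσs) g.2
      simpa [Subgroup.smul_def] using hg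
  have htf : {x | σ x = x}.toFinset = Finset.univ.filter fun i => σ i = i := by
    ext x; simp
  have hcard : Nat.card (MulAction.fixedPoints (Subgroup.zpowers σ) α) = f := by
    rw [hfixeq, Nat.card_eq_fintype_card, ← Set.toFinset_card, htf, hf]
  rw [hcard, Nat.card_eq_fintype_card] at hmod
  obtain ⟨c, hc⟩ := (Nat.modEq_iff_dvd' hfle).mp hmod.symm
  exact ⟨c, by rw [mul_comm c p, ← hc, Nat.sub_add_cancel hfle]⟩

/-- Group-theoretic core of Proposition 4.1: if every element of prime order `p` in a
permutation group `G` on a finite set `α` has fewer than `p` fixed points and a number of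
`p`-cycles not divisible by `p`, then `p²` does not divide `|G|`. -/
theorem p_squared_not_dvd_of_fixed_points_lt {α : Type*} [Fintype α] [DecidableEq α]
    (G : Subgroup (Equiv.Perm α)) (p : ℕ) (hp : p.Prime)
    (h : ∀ σ ∈ G, orderOf σ = p →
      ∀ c f : ℕ, f = (Finset.univ.filter fun i => σ i = i).card →
        Fintype.card α = c * p + f → f < p ∧ ¬ p ∣ c) :
    ¬ p ^ 2 ∣ Nat.card G := by
  intro hdvd
  haveI : Fact p.Prime := ⟨hp⟩
  have hlt : ∀ σ ∈ G, orderOf σ = p → (Finset.univ.filter fun i => σ i = i).card < p := by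
    intro σ hσG hσ
    obtain ⟨c, hc⟩ := perm_card_mod_aux hp σ hσ
    exact (h σ hσG hσ c _ rfl hc).1
  obtain ⟨K, hK⟩ := Sylow.exists_subgroup_card_pow_prime (G := G) p (n := 2) hdvd
  set H : Subgroup (Equiv.Perm α) := K.map G.subtype with hH
  have hHle : H ≤ G := Subgroup.map_subtype_le K
  have hHcard : Nat.card H = p ^ 2 := by
    rw [← hK]
    exact (Nat.card_congr (Subgroup.equivMapOfInjective K G.subtype
      G.subtype_injective).toEquiv).symm
  have hcomm : ∀ a b : H, a * b = b * a := IsPGroup.commutative_of_card_eq_prime_sq hHcard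
  haveI : Fintype H := Fintype.ofFinite _
  have hHcard' : Fintype.card H = p ^ 2 := by rw [← Nat.card_eq_fintype_card, hHcard]
  -- every stabilizer is ⊥ or ⊤
  have hdich : ∀ x : α, MulAction.stabilizer H x = ⊥ ∨ MulAction.stabilizer H x = ⊤ := by
    intro x
    by_contra hcon
    push_neg at hcon
    obtain ⟨hb, ht⟩ := hcon
    have hsdvd : Nat.card (MulAction.stabilizer H x) ∣ p ^ 2 :=
      hHcard ▸ Subgroup.card_subgroup_dvd_card _
    obtain ⟨i, hi2, hie⟩ := (Nat.dvd_prime_pow hp).mp hsdvd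
    interval_cases i
    · rw [pow_zero] at hie
      exact hb (Subgroup.card_eq_one.mp hie)
    · -- stabilizer has order p
      rw [pow_one] at hie
      haveI : Fintype (MulAction.stabilizer H x) := Fintype.ofFinite _
      have hie' : Fintype.card (MulAction.stabilizer H x) = p := by
        rw [← Nat.card_eq_fintype_card, hie]
      obtain ⟨κ, hκ⟩ := exists_prime_orderOf_dvd_card p (dvd_of_eq hie'.symm)
      set θ : Equiv.Perm α := ((κ : H) : Equiv.Perm α) with hθ
      have hθord : orderOf θ = p := by
        rw [← hκ]
        exact orderOf_injective (H.subtype.comp (MulAction.stabilizer H x).subtype)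
          (H.subtype_injective.comp (Subgroup.subtype_injective _)) κ
      have hθG : θ ∈ G := hHle (κ : H).2
      -- θ fixes the whole orbit of x
      have horb : ∀ y ∈ MulAction.orbit H x, θ y = y := by
        rintro y ⟨g, rfl⟩
        have hx : (κ : H) • x = x := κ.2
        have : (κ : H) • (g • x) = g • x := by
          rw [smul_smul, hcomm, ← smul_smul, hx]
        simpa [Subgroup.smul_def, Equiv.Perm.smul_def] using this
      haveI : Fintype (MulAction.orbit H x) := Fintype.ofFinite _
      have horbcard : Fintype.card (MulAction.orbit H x) = p := by
        have hos := MulAction.card_orbit_mul_card_stabilizer_eq_card_group H x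
        rw [hie', hHcard', sq] at hos
        exact Nat.eq_of_mul_eq_mul_right hp.pos hos
      have hsub : (MulAction.orbit H x).toFinset ⊆
          Finset.univ.filter fun i => θ i = i := by
        intro y hy
        rw [Set.mem_toFinset] at hy
        simp [horb y hy]
      have hple := Finset.card_le_card hsub
      rw [Set.toFinset_card, horbcard] at hple
      exact absurd (hlt θ hθG hθord) (not_lt.mpr hple)
    · exact ht (Subgroup.eq_top_of_card_eq _ (by rw [hie, hHcard]))
  -- pick τ of order p in H
  obtain ⟨θ0, hθ0⟩ := exists_prime_orderOf_dvd_card p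
    (show p ∣ Fintype.card H by rw [hHcard', sq]; exact dvd_mul_right p p)
  set τ : Equiv.Perm α := (θ0 : Equiv.Perm α) with hτ
  have hτord : orderOf τ = p :=
    hθ0 ▸ orderOf_injective H.subtype H.subtype_injective θ0
  have hτG : τ ∈ G := hHle θ0.2
  have hθ0ne : θ0 ≠ 1 := by
    intro he
    rw [he, orderOf_one] at hθ0
    exact hp.one_lt.ne hθ0
  -- the fixed points of τ are exactly the fixed points of H
  have hfixτ : ∀ x : α, τ x = x ↔ x ∈ MulAction.fixedPoints H α := by
    intro x
    constructor
    · intro hx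
      have hmem : θ0 ∈ MulAction.stabilizer H x := by
        simpa [Subgroup.smul_def, Equiv.Perm.smul_def] using hx
      have hne : MulAction.stabilizer H x ≠ ⊥ := by
        intro hbot
        rw [hbot, Subgroup.mem_bot] at hmem
        exact hθ0ne hmem
      have htop := (hdich x).resolve_left hne
      intro g
      have : g ∈ MulAction.stabilizer H x := htop ▸ Subgroup.mem_top g
      exact this
    · intro hx
      have := hx θ0
      simpa [Subgroup.smul_def, Equiv.Perm.smul_def] using this
  -- for every nontrivial g : H, fixedBy α g = fixedPoints H α
  have hfixBy : ∀ g : H, g ≠ 1 → MulAction.fixedBy α g = MulAction.fixedPoints H α := by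
    intro g hg
    ext x
    constructor
    · intro hx
      have hmem : g ∈ MulAction.stabilizer H x := hx
      have hne : MulAction.stabilizer H x ≠ ⊥ := by
        intro hbot
        rw [hbot, Subgroup.mem_bot] at hmem
        exact hg hmem
      have htop := (hdich x).resolve_left hne
      intro k
      exact (htop ▸ Subgroup.mem_top k : k ∈ MulAction.stabilizer H x)
    · intro hx
      exact hx g
  -- Burnside
  haveI : ∀ g : H, Fintype (MulAction.fixedBy α g) := fun g => Fintype.ofFinite _
  haveI : Fintype (MulAction.fixedPoints H α) := Fintype.ofFinite _
  haveI : Fintype (MulAction.orbitRel.Quotient H α) := Fintype.ofFinite _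
  have hburn := MulAction.sum_card_fixedBy_eq_card_orbits_mul_card_group H α
  simp only [← Nat.card_eq_fintype_card] at hburn
  set a : ℕ := Nat.card (MulAction.fixedPoints H α) with ha
  set N : ℕ := Nat.card (Quotient (MulAction.orbitRel H α)) with hN
  have hsum : ∑ g : H, Nat.card (MulAction.fixedBy α g) =
      Nat.card α + (p ^ 2 - 1) * a := by
    rw [← Finset.sum_erase_add _ _ (Finset.mem_univ (1 : H))]
    have h1 : Nat.card (MulAction.fixedBy α (1 : H)) = Nat.card α := by
      rw [show MulAction.fixedBy α (1 : H) = Set.univ by ext x; simp [MulAction.mem_fixedBy]]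
      exact Nat.card_congr (Equiv.Set.univ α)
    have h2 : ∀ g ∈ Finset.univ.erase (1 : H), Nat.card (MulAction.fixedBy α g) = a := by
      intro g hg
      rw [hfixBy g (Finset.ne_of_mem_erase hg)]
    rw [Finset.sum_congr rfl h2, Finset.sum_const, smul_eq_mul, h1,
      Finset.card_erase_of_mem (Finset.mem_univ _), Finset.card_univ, hHcard']
    ring
  rw [hsum] at hburn
  rw [hHcard] at hburn
  -- hburn : Nat.card α + (p^2 - 1) * a = N * p^2
  have halen : a ≤ Nat.card α := by
    rw [ha]
    exact Nat.card_le_card_of_injective _ Subtype.val_injective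
  have hq1 : 1 ≤ p ^ 2 := Nat.one_le_pow _ _ hp.pos
  have hZ : (Nat.card α : ℤ) + (p : ℤ) ^ 2 * a = N * (p : ℤ) ^ 2 + a := by
    have := hburn
    zify [hq1] at this
    linarith
  have hdvdZ : ((p : ℤ) ^ 2) ∣ ((Nat.card α - a : ℕ) : ℤ) := by
    refine ⟨(N : ℤ) - a, ?_⟩
    rw [Nat.cast_sub halen]
    linarith
  have hdvdN : p ^ 2 ∣ Nat.card α - a := by
    have := hdvdZ
    rw [show ((p : ℤ) ^ 2) = ((p ^ 2 : ℕ) : ℤ) by push_cast; ring] at this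
    exact_mod_cast this
  obtain ⟨d, hd⟩ := hdvdN
  -- now contradict h with σ = τ, c = p * d
  have hfcard : (Finset.univ.filter fun i => τ i = i).card = a := by
    have hset : {x | τ x = x} = MulAction.fixedPoints H α := Set.ext hfixτ
    have htf : (MulAction.fixedPoints H α).toFinset = Finset.univ.filter fun i => τ i = i := by
      ext x
      simp [Set.mem_toFinset, ← hfixτ x]
    rw [← htf, Set.toFinset_card, ha, Nat.card_eq_fintype_card]
  have hceq : Fintype.card α = (p * d) * p + a := by
    have : Nat.card α = p ^ 2 * d + a := by omega
    rw [← Nat.card_eq_fintype_card, this]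
    ring
  have := h τ hτG hτord (p * d) _ hfcard.symm hceq
  exact this.2 (dvd_mul_right p d)
end

section
/- Let G be a finite group of order 2^a·3·5·29 with 0 ≤ a ≤ 3 such that G has no element of order 3·29, no element of order 5·29, and no element of order 2·29, and any nonabelian composition factor of G is A₅. Then no such G exists. -/
open Subgroup MulAction

private lemma mod29_of_dvd120 {n : ℕ} (h : n ∣ 120) (hm : n % 29 = 1) : n = 1 ∨ n = 30 := by
  have hle : n ≤ 120 := Nat.le_of_dvd (by norm_num) h
  interval_cases n <;> omega

private lemma dvd120_of_30dvd {n : ℕ} (h : n ∣ 120) (h30 : 30 ∣ n) :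
    n = 30 ∨ n = 60 ∨ n = 120 := by
  have hle : n ≤ 120 := Nat.le_of_dvd (by norm_num) h
  interval_cases n <;> omega

universe u

variable {G : Type u} [Group G]

private def conjAct' (N : Subgroup G) [N.Normal] (g : G) :
    MulAction ↥(zpowers g) ↥N :=
  MulAction.compHom ↥N ((MulAut.conjNormal : G →* MulAut ↥N).comp (zpowers g).subtype)

private lemma conj_modEq [Finite G] (N : Subgroup G) [N.Normal] {g : G} {p : ℕ} [hp : Fact p.Prime]
    (hg : orderOf g = p) :
    Nat.card N ≡ Nat.card ↥(centralizer {g} ⊓ N) [MOD p] := by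
  letI := conjAct' N g
  have hsmul : ∀ (z : ↥(zpowers g)) (x : ↥N), ((z • x : ↥N) : G) = (z : G) * x * (z : G)⁻¹ :=
    fun z x => by
      show ((MulAut.conjNormal (z : G) : MulAut ↥N) x : G) = _
      exact MulAut.conjNormal_apply _ _
  have hP : IsPGroup p ↥(zpowers g) :=
    IsPGroup.of_card (n := 1) (by rw [Nat.card_zpowers, hg, pow_one])
  have key : ∀ x : ↥N, x ∈ fixedPoints ↥(zpowers g) ↥N ↔ (x : G) ∈ centralizer {g} := by
    intro x
    rw [mem_fixedPoints]
    constructor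
    · intro hx
      have h1 := congrArg (Subtype.val) (hx ⟨g, mem_zpowers g⟩)
      rw [hsmul] at h1
      rw [mem_centralizer_singleton_iff]
      calc (x : G) * g = (g * x * g⁻¹) * g := by rw [h1]
        _ = g * x := by group
    · intro hx z
      obtain ⟨k, hk⟩ := z.2
      have hcx : Commute (x : G) g := mem_centralizer_singleton_iff.mp hx
      have hk' : g ^ k = (z : G) := hk
      have hc : Commute ((z : G)) (x : G) := by
        have := (hcx.zpow_right k).symm
        rwa [hk'] at this
      apply Subtype.ext
      rw [hsmul, hc.eq, mul_inv_cancel_right]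
  have e : ↥(fixedPoints ↥(zpowers g) ↥N) ≃ ↥(centralizer {g} ⊓ N) :=
    { toFun := fun x => ⟨x.1.1, mem_inf.mpr ⟨(key x.1).mp x.2, x.1.2⟩⟩
      invFun := fun y => ⟨⟨y.1, (mem_inf.mp y.2).2⟩, (key _).mpr (mem_inf.mp y.2).1⟩
      left_inv := fun x => Subtype.ext (Subtype.ext rfl)
      right_inv := fun y => rfl }
  have h := hP.card_modEq_card_fixedPoints ↥N
  rwa [Nat.card_congr e] at h
private lemma order30 [Finite G] (N : Subgroup G) [N.Normal] {g : G}
    (hg : orderOf g = 29) (hinf : centralizer {g} ⊓ N = ⊥)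
    (hcard : Nat.card N = 30) : False := by
  haveI f29 : Fact (Nat.Prime 29) := ⟨by norm_num⟩
  letI := conjAct' N g
  have hsmul : ∀ (z : ↥(zpowers g)) (x : ↥N), ((z • x : ↥N) : G) = (z : G) * x * (z : G)⁻¹ :=
    fun z x => by
      show ((MulAut.conjNormal (z : G) : MulAut ↥N) x : G) = _
      exact MulAut.conjNormal_apply _ _
  have hP : IsPGroup 29 ↥(zpowers g) :=
    IsPGroup.of_card (n := 1) (by rw [Nat.card_zpowers, hg, pow_one])
  have hfix : ∀ x : ↥N, x ∈ fixedPoints ↥(zpowers g) ↥N → x = 1 := by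
    intro x hx
    have h1 := congrArg (Subtype.val) (hx ⟨g, mem_zpowers g⟩)
    rw [hsmul] at h1
    have hxc : (x : G) ∈ centralizer {g} := by
      rw [mem_centralizer_singleton_iff]
      calc (x : G) * g = (g * x * g⁻¹) * g := by rw [h1]
        _ = g * x := by group
    have : (x : G) ∈ centralizer {g} ⊓ N := mem_inf.mpr ⟨hxc, x.2⟩
    rw [hinf, mem_bot] at this
    exact Subtype.ext this
  have hordsmul : ∀ (z : ↥(zpowers g)) (x : ↥N), orderOf (z • x) = orderOf x := by
    intro z x
    exact orderOf_injective ((MulAut.conjNormal (z : G) : MulAut ↥N) : ↥N →* ↥N)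
      (MulEquiv.injective _) x
  obtain ⟨x2, hx2⟩ := exists_prime_orderOf_dvd_card' (G := ↥N) 2 (by rw [hcard]; norm_num)
  obtain ⟨x3, hx3⟩ := exists_prime_orderOf_dvd_card' (G := ↥N) 3 (by rw [hcard]; norm_num)
  obtain ⟨m, hm⟩ := hP.card_orbit x2
  have horb_le : Nat.card ↥(orbit ↥(zpowers g) x2) ≤ 30 := by
    rw [← hcard]
    exact Nat.card_le_card_of_injective _ Subtype.val_injective
  have hne1 : Nat.card ↥(orbit ↥(zpowers g) x2) ≠ 1 := by
    intro h1
    haveI := Fintype.ofFinite ↥(orbit ↥(zpowers g) x2)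
    rw [Nat.card_eq_fintype_card] at h1
    have hx2fix : x2 ∈ fixedPoints ↥(zpowers g) ↥N :=
      mem_fixedPoints_iff_card_orbit_eq_one.mpr h1
    have := hfix x2 hx2fix
    rw [this, orderOf_one] at hx2
    norm_num at hx2
  have hcard_orb : Nat.card ↥(orbit ↥(zpowers g) x2) = 29 := by
    rcases m with _ | _ | m
    · rw [pow_zero] at hm; exact absurd hm hne1
    · rw [pow_one] at hm; exact hm
    · exfalso
      have h2 : (29:ℕ)^2 ≤ 29^(m+2) := Nat.pow_le_pow_right (by norm_num) (by omega)
      rw [hm] at horb_le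
      have h3 := le_trans h2 horb_le
      norm_num at h3
  have hsub : orbit ↥(zpowers g) x2 ⊆ ({(1 : ↥N)}ᶜ : Set ↥N) := by
    rintro y ⟨z, rfl⟩
    simp only [Set.mem_compl_iff, Set.mem_singleton_iff]
    intro h1
    have h2 := hordsmul z x2
    rw [h1, hx2, orderOf_one] at h2
    norm_num at h2
  have hcompl : ({(1 : ↥N)}ᶜ : Set ↥N).ncard = 29 := by
    have h1 := Set.ncard_add_ncard_compl ({(1 : ↥N)} : Set ↥N)
    simp only [Set.ncard_singleton, Set.ncard_univ, hcard] at h1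
    omega
  have horbn : (orbit ↥(zpowers g) x2).ncard = 29 := by
    rw [← Nat.card_coe_set_eq]
    exact hcard_orb
  have heq : orbit ↥(zpowers g) x2 = ({(1 : ↥N)}ᶜ : Set ↥N) :=
    Set.eq_of_subset_of_ncard_le hsub (by rw [hcompl, horbn]) (Set.toFinite _)
  have hx3mem : x3 ∈ orbit ↥(zpowers g) x2 := by
    rw [heq]
    simp only [Set.mem_compl_iff, Set.mem_singleton_iff]
    intro h1
    rw [h1, orderOf_one] at hx3
    norm_num at hx3
  obtain ⟨z, hz⟩ := hx3mem
  have h2 := hordsmul z x2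
  rw [show z • x2 = x3 from hz, hx2, hx3] at h2
  norm_num at h2
private theorem aux : ∀ (n : ℕ) (G : Type u) [Group G] [Finite G], Nat.card G = n →
    ∀ (a : ℕ), a ≤ 3 → Nat.card G = 2 ^ a * 3 * 5 * 29 →
    (∀ g : G, orderOf g ≠ 3 * 29) → (∀ g : G, orderOf g ≠ 5 * 29) →
    (∀ g : G, orderOf g ≠ 2 * 29) →
    (∀ (H : Subgroup G) (N : Subgroup H) (hN : N.Normal),
      haveI := hN
      IsSimpleGroup (H ⧸ N) →
      (¬ ∀ x y : H ⧸ N, x * y = y * x) → Nonempty ((H ⧸ N) ≃* alternatingGroup (Fin 5))) →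
    False := by
  intro n
  induction n using Nat.strong_induction_on with
  | _ n IH =>
  intro G _ _ hn a ha hord h387 h545 h58 hcf
  haveI f2 : Fact (Nat.Prime 2) := ⟨by norm_num⟩
  haveI f3 : Fact (Nat.Prime 3) := ⟨by norm_num⟩
  haveI f5 : Fact (Nat.Prime 5) := ⟨by norm_num⟩
  haveI f29 : Fact (Nat.Prime 29) := ⟨by norm_num⟩
  have hGdvd : Nat.card G ∣ 3480 := by
    rw [hord]
    have h1 : 2^a*3*5*29 ∣ 2^3*3*5*29 :=
      Nat.mul_dvd_mul_right (Nat.mul_dvd_mul_right (Nat.mul_dvd_mul_right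
        (Nat.pow_dvd_pow 2 ha) 3) 5) 29
    simpa using h1
  have h29G : 29 ∣ Nat.card G := by rw [hord]; exact dvd_mul_left 29 _
  obtain ⟨g, hg⟩ := exists_prime_orderOf_dvd_card' 29 h29G
  have hgC : g ∈ centralizer ({g} : Set G) := mem_centralizer_singleton_iff.mpr rfl
  -- the centralizer of g has order 29
  have hCp : ∀ p : ℕ, Fact p.Prime → p ≠ 29 → (∀ x : G, orderOf x ≠ p * 29) →
      ¬ (p ∣ Nat.card ↥(centralizer ({g} : Set G))) := by
    intro p hp hpne hforb hdvd
    obtain ⟨x, hx⟩ := @exists_prime_orderOf_dvd_card' _ _ _ p hp hdvd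
    have hcomm : Commute (x : G) g := mem_centralizer_singleton_iff.mp x.2
    have hox : orderOf (x : G) = p := by rw [Subgroup.orderOf_coe]; exact hx
    have : orderOf ((x : G) * g) = p * 29 := by
      rw [hcomm.orderOf_mul_eq_mul_orderOf_of_coprime, hox, hg]
      rw [hox, hg]
      exact (Nat.coprime_primes hp.1 f29.1).mpr hpne
    exact hforb _ this
  have hC29 : Nat.card ↥(centralizer ({g} : Set G)) = 29 := by
    have hdvdG : Nat.card ↥(centralizer ({g} : Set G)) ∣ 3480 :=
      (Subgroup.card_subgroup_dvd_card _).trans hGdvd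
    have h29C : 29 ∣ Nat.card ↥(centralizer ({g} : Set G)) :=
      hg ▸ Subgroup.orderOf_dvd_natCard _ hgC
    have hn2 := hCp 2 f2 (by norm_num) h58
    have hn3 := hCp 3 f3 (by norm_num) h387
    have hn5 := hCp 5 f5 (by norm_num) h545
    set m := Nat.card ↥(centralizer ({g} : Set G)) with hm
    have hc2 : m.Coprime 2 := Nat.coprime_comm.mp (f2.1.coprime_iff_not_dvd.mpr hn2)
    have hc8 : m.Coprime 8 := by
      have := hc2.pow_right 3; norm_num at this; exact this
    have hd1 : m ∣ 435 := (Nat.Coprime.dvd_of_dvd_mul_left hc8 (by norm_num at hdvdG ⊢; exact ((by norm_num : (3480:ℕ) = 8 * 435) ▸ hdvdG)))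
    have hc3 : m.Coprime 3 := Nat.coprime_comm.mp (f3.1.coprime_iff_not_dvd.mpr hn3)
    have hd2 : m ∣ 145 := Nat.Coprime.dvd_of_dvd_mul_left hc3 ((by norm_num : (435:ℕ) = 3 * 145) ▸ hd1)
    have hc5 : m.Coprime 5 := Nat.coprime_comm.mp (f5.1.coprime_iff_not_dvd.mpr hn5)
    have hd3 : m ∣ 29 := Nat.Coprime.dvd_of_dvd_mul_left hc5 ((by norm_num : (145:ℕ) = 5 * 29) ▸ hd2)
    exact Nat.dvd_antisymm hd3 h29C
  -- key claim: no nontrivial proper normal subgroup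
  have hclaim : ∀ (N : Subgroup G), N.Normal → N ≠ ⊥ → N ≠ ⊤ → False := by
    intro N hNn hbot htop
    haveI := hNn
    have hNdvd : Nat.card ↥N ∣ Nat.card G := Subgroup.card_subgroup_dvd_card N
    have hNpos : Nat.card ↥N ≠ 0 := Nat.card_pos.ne'
    by_cases h29N : 29 ∣ Nat.card ↥N
    · -- Sylow branch
      obtain ⟨Q⟩ : Nonempty (Sylow 29 ↥N) := Sylow.nonempty
      have hfact : (Nat.card ↥N).factorization 29 = 1 := by
        have h1 : 1 ≤ (Nat.card ↥N).factorization 29 :=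
          (f29.1.pow_dvd_iff_le_factorization hNpos).mp (by simpa using h29N)
        have h2 : ¬ 2 ≤ (Nat.card ↥N).factorization 29 := by
          intro h2
          have h3 := (f29.1.pow_dvd_iff_le_factorization hNpos).mpr h2
          have h4 : (29:ℕ)^2 ∣ 3480 := h3.trans (hNdvd.trans hGdvd)
          norm_num at h4
        omega
      have hQcard : Nat.card ↥(Q : Subgroup ↥N) = 29 := by
        rw [Q.card_eq_multiplicity, hfact, pow_one]
      have hQindex : 29 * (Q : Subgroup ↥N).index = Nat.card ↥N := by
        have h0 := Subgroup.card_mul_index (Q : Subgroup ↥N)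
        rwa [hQcard] at h0
      have hidx120 : (Q : Subgroup ↥N).index ∣ 120 := by
        have h1 : 29 * (Q : Subgroup ↥N).index ∣ 29 * 120 := by
          rw [hQindex]
          simpa using hNdvd.trans hGdvd
        exact (Nat.mul_dvd_mul_iff_left (by norm_num : 0 < 29)).mp h1
      have hsyl : Nat.card (Sylow 29 ↥N) ∣ 120 := (Sylow.card_dvd_index Q).trans hidx120
      have hsylmod : Nat.card (Sylow 29 ↥N) % 29 = 1 := by
        have h1 := card_sylow_modEq_one 29 ↥N
        simpa [Nat.ModEq] using h1
      rcases mod29_of_dvd120 hsyl hsylmod with h1 | h30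
      · -- unique Sylow: produces normal subgroup of G of order 29
        haveI hsing : Subsingleton (Sylow 29 ↥N) := (Nat.card_eq_one_iff_unique.mp h1).1
        set M : Subgroup G := (Q : Subgroup ↥N).map N.subtype with hMdef
        have hMcard : Nat.card ↥M = 29 :=
          ((Nat.card_congr
            ((Q : Subgroup ↥N).equivMapOfInjective N.subtype N.subtype_injective).toEquiv).symm).trans hQcard
        haveI hMnorm : M.Normal := by
          constructor
          intro x hx γ
          obtain ⟨nn, hnn, rfl⟩ := hx
          have hmap : IsPGroup 29
              ↥((Q : Subgroup ↥N).map ((MulAut.conjNormal γ : MulAut ↥N) : ↥N →* ↥N)) := by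
            exact IsPGroup.of_card (n := 1)
              (((Nat.card_congr ((Q : Subgroup ↥N).equivMapOfInjective _
                (MulEquiv.injective _)).toEquiv).symm.trans hQcard).trans (pow_one 29).symm)
          obtain ⟨R, hR⟩ := hmap.exists_le_sylow
          have hmem : (MulAut.conjNormal γ : MulAut ↥N) nn ∈ (Q : Subgroup ↥N) := by
            have h1' : (MulAut.conjNormal γ : MulAut ↥N) nn ∈
                (Q : Subgroup ↥N).map ((MulAut.conjNormal γ : MulAut ↥N) : ↥N →* ↥N) :=
              Subgroup.mem_map_of_mem _ hnn
            have h2' := hR h1'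
            rwa [Subsingleton.elim R Q] at h2'
          refine Subgroup.mem_map.mpr ⟨(MulAut.conjNormal γ : MulAut ↥N) nn, hmem, ?_⟩
          exact MulAut.conjNormal_apply _ _
        -- order-3 element centralizes M
        obtain ⟨t, ht⟩ := exists_prime_orderOf_dvd_card' (G := G) 3
          (by rw [hord]; exact ⟨2^a*5*29, by ring⟩)
        have hmod3 := conj_modEq M ht
        have hKdvd : Nat.card ↥(centralizer ({t} : Set G) ⊓ M) ∣ 29 :=
          hMcard ▸ Subgroup.card_dvd_of_le inf_le_right
        have hK : Nat.card ↥(centralizer ({t} : Set G) ⊓ M) = 29 := by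
          rcases (Nat.Prime.eq_one_or_self_of_dvd f29.1 _ hKdvd) with h | h
          · exfalso
            rw [hMcard, h] at hmod3
            simp [Nat.ModEq] at hmod3
          · exact h
        have hMeq : centralizer ({t} : Set G) ⊓ M = M :=
          Subgroup.eq_of_le_of_card_ge inf_le_right (by rw [hK, hMcard])
        obtain ⟨y, hy⟩ := exists_prime_orderOf_dvd_card' (G := ↥M) 29 (by rw [hMcard])
        have hyC : (y : G) ∈ centralizer ({t} : Set G) := by
          have : (y : G) ∈ centralizer ({t} : Set G) ⊓ M := hMeq.symm ▸ y.2
          exact (mem_inf.mp this).1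
        have hyc : Commute t (y : G) := (mem_centralizer_singleton_iff.mp hyC).symm
        have hoy : orderOf (y : G) = 29 := by rw [Subgroup.orderOf_coe]; exact hy
        have : orderOf (t * (y : G)) = 3 * 29 := by
          rw [hyc.orderOf_mul_eq_mul_orderOf_of_coprime, ht, hoy]
          rw [ht, hoy]; norm_num
        exact h387 _ this
      · -- 30 Sylow subgroups: recurse into N
        have h30idx : 30 ∣ (Q : Subgroup ↥N).index := h30 ▸ Sylow.card_dvd_index Q
        have hlt : Nat.card ↥N < n := by
          rw [← hn]
          have hne : Nat.card ↥N ≠ Nat.card G := fun hcontra =>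
            htop (Subgroup.eq_top_of_card_eq N hcontra)
          exact lt_of_le_of_ne (Nat.le_of_dvd Nat.card_pos hNdvd) hne
        have h387' : ∀ x : ↥N, orderOf x ≠ 3 * 29 := fun x hx =>
          h387 (x : G) (by rw [Subgroup.orderOf_coe]; exact hx)
        have h545' : ∀ x : ↥N, orderOf x ≠ 5 * 29 := fun x hx =>
          h545 (x : G) (by rw [Subgroup.orderOf_coe]; exact hx)
        have h58' : ∀ x : ↥N, orderOf x ≠ 2 * 29 := fun x hx =>
          h58 (x : G) (by rw [Subgroup.orderOf_coe]; exact hx)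
        have hcf' : ∀ (H : Subgroup ↥N) (N' : Subgroup ↥H) (hN' : N'.Normal),
            haveI := hN'
            IsSimpleGroup (↥H ⧸ N') →
            (¬ ∀ x y : ↥H ⧸ N', x * y = y * x) →
            Nonempty ((↥H ⧸ N') ≃* alternatingGroup (Fin 5)) := by
          intro H N' hN'
          haveI := hN'
          intro hsimp hnab
          haveI := hsimp
          set e := H.equivMapOfInjective N.subtype N.subtype_injective with he
          set N₀ : Subgroup ↥(H.map N.subtype) := N'.map (e : ↥H →* ↥(H.map N.subtype)) with hN₀def
          haveI hN₀ : N₀.Normal := Subgroup.Normal.map hN' _ e.surjective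
          set q := QuotientGroup.congr N' N₀ e rfl with hq
          haveI : Nontrivial (↥(H.map N.subtype) ⧸ N₀) := q.symm.toEquiv.nontrivial
          haveI : IsSimpleGroup (↥(H.map N.subtype) ⧸ N₀) :=
            IsSimpleGroup.isSimpleGroup_of_surjective q.toMonoidHom q.surjective
          obtain ⟨i⟩ := hcf (H.map N.subtype) N₀ hN₀ this
            (fun hab => hnab fun x y => q.injective (by rw [map_mul, map_mul, hab]))
          exact ⟨q.trans i⟩
        rcases dvd120_of_30dvd hidx120 h30idx with h | h | h
        · exact IH (Nat.card ↥N) hlt ↥N rfl 1 (by norm_num)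
            (by rw [← hQindex, h]; norm_num) h387' h545' h58' hcf'
        · exact IH (Nat.card ↥N) hlt ↥N rfl 2 (by norm_num)
            (by rw [← hQindex, h]; norm_num) h387' h545' h58' hcf'
        · exact IH (Nat.card ↥N) hlt ↥N rfl 3 (by norm_num)
            (by rw [← hQindex, h]; norm_num) h387' h545' h58' hcf'
    · -- 29 does not divide |N|
      have hmod := conj_modEq N hg
      have hKdvdC : Nat.card ↥(centralizer ({g} : Set G) ⊓ N) ∣ 29 :=
        hC29 ▸ Subgroup.card_dvd_of_le inf_le_left
      have hKdvdN : Nat.card ↥(centralizer ({g} : Set G) ⊓ N) ∣ Nat.card ↥N :=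
        Subgroup.card_dvd_of_le inf_le_right
      have hK1 : Nat.card ↥(centralizer ({g} : Set G) ⊓ N) = 1 := by
        rcases (Nat.Prime.eq_one_or_self_of_dvd f29.1 _ hKdvdC) with h | h
        · exact h
        · exact absurd (h ▸ hKdvdN) h29N
      have hmod' : Nat.card ↥N % 29 = 1 := by
        rw [hK1] at hmod
        simpa [Nat.ModEq] using hmod
      have hN120 : Nat.card ↥N ∣ 120 := by
        have h1 : Nat.card ↥N ∣ 3480 := hNdvd.trans hGdvd
        have hco : (Nat.card ↥N).Coprime 29 :=
          Nat.coprime_comm.mp (f29.1.coprime_iff_not_dvd.mpr h29N)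
        exact Nat.Coprime.dvd_of_dvd_mul_right hco
          ((by norm_num : (3480:ℕ) = 120 * 29) ▸ h1)
      rcases mod29_of_dvd120 hN120 hmod' with h1 | h30
      · exact hbot (Subgroup.card_eq_one.mp h1)
      · exact order30 N hg (Subgroup.card_eq_one.mp hK1) h30
  -- G is simple
  have hG1 : 1 < Nat.card G := by
    rw [hord]
    have h1 : 1 ≤ 2^a := Nat.one_le_two_pow
    nlinarith
  haveI : Nontrivial G := Finite.one_lt_card_iff_nontrivial.mp hG1
  haveI hGsimple : IsSimpleGroup G := by
    constructor
    intro H hH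
    by_contra hcon
    push_neg at hcon
    exact hclaim H hH hcon.1 hcon.2
  have hnab : ¬ ∀ x y : G, x * y = y * x := by
    intro hab
    have hz : (zpowers g).Normal := by
      constructor
      intro x hx γ
      rw [hab γ x, mul_assoc, mul_inv_cancel, mul_one]
      exact hx
    have hzb : zpowers g ≠ ⊥ := by
      intro h
      have h1 : g ∈ (⊥ : Subgroup G) := h ▸ mem_zpowers g
      rw [mem_bot] at h1
      rw [h1, orderOf_one] at hg
      norm_num at hg
    have hzt : zpowers g ≠ ⊤ := by
      intro h
      have h1 : Nat.card ↥(zpowers g) = 29 := by rw [Nat.card_zpowers, hg]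
      rw [h, Subgroup.card_top] at h1
      rw [h1] at hG1
      omega
    exact hclaim _ hz hzb hzt
  -- apply the composition factor hypothesis to G itself
  set e0 : (↥(⊤ : Subgroup G) ⧸ (⊥ : Subgroup ↥(⊤ : Subgroup G))) ≃* G :=
    (QuotientGroup.quotientBot).trans Subgroup.topEquiv with he0
  haveI : Nontrivial (↥(⊤ : Subgroup G) ⧸ (⊥ : Subgroup ↥(⊤ : Subgroup G))) :=
    e0.toEquiv.nontrivial
  haveI hsimp0 : IsSimpleGroup (↥(⊤ : Subgroup G) ⧸ (⊥ : Subgroup ↥(⊤ : Subgroup G))) :=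
    IsSimpleGroup.isSimpleGroup_of_surjective e0.symm.toMonoidHom e0.symm.surjective
  obtain ⟨i⟩ := hcf ⊤ ⊥ inferInstance hsimp0 (fun hab => hnab fun x y => by
    have h1 := hab (e0.symm x) (e0.symm y)
    have h2 := congrArg e0 h1
    simpa [map_mul] using h2)
  have hcard60 : Nat.card G = 60 := by
    have h1 : Nat.card (↥(⊤ : Subgroup G) ⧸ (⊥ : Subgroup ↥(⊤ : Subgroup G))) = Nat.card G :=
      Nat.card_congr e0.toEquiv
    have h2 : Nat.card (alternatingGroup (Fin 5)) = 60 := by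
      have h3 := two_mul_card_alternatingGroup (α := Fin 5)
      rw [Fintype.card_perm, Fintype.card_fin] at h3
      rw [Nat.card_eq_fintype_card]
      have h4 : (5:ℕ).factorial = 120 := by norm_num [Nat.factorial]
      rw [h4] at h3
      omega
    rw [← h1, Nat.card_congr i.toEquiv, h2]
  rw [hcard60] at h29G
  norm_num at h29G


/-- Core of Proposition 5.5 a): there is no finite group of order `2^a·3·5·29` (`0 ≤ a ≤ 3`)
without elements of order `3·29`, `5·29` and `2·29` all of whose nonabelian simple
composition factors are `A₅`. -/
theorem no_group_of_order_2a_3_5_29 (G : Type*) [Group G] [Finite G] (a : ℕ) (ha : a ≤ 3)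
    (hord : Nat.card G = 2 ^ a * 3 * 5 * 29)
    (h387 : ∀ g : G, orderOf g ≠ 3 * 29)
    (h545 : ∀ g : G, orderOf g ≠ 5 * 29)
    (h58 : ∀ g : G, orderOf g ≠ 2 * 29)
    (hcf : ∀ (H : Subgroup G) (N : Subgroup H) (hN : N.Normal),
      haveI := hN
      IsSimpleGroup (H ⧸ N) →
      (¬ ∀ x y : H ⧸ N, x * y = y * x) → Nonempty ((H ⧸ N) ≃* alternatingGroup (Fin 5))) :
    False :=
  aux (Nat.card G) G rfl a ha hord h387 h545 h58 hcf
end
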